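/- Let H be a subgroup of ℤ^m and let b ∈ ℤ^m with b ∉ H. Then there exist a positive integer d and an additive group homomorphism θ : ℤ^m → ℤ/dℤ such that θ vanishes on H and θ(b) ≠ 0. -/

import Mathlib

/-- If `H` is a subgroup of `ℤ^m` and `b ∉ H`, then there is a positive integer `d`
and an additive group homomorphism `θ : ℤ^m → ℤ/dℤ` vanishing on `H` with `θ b ≠ 0`. -/
theorem exists_hom_to_zmod_separating {m : ℕ} (H : AddSubgroup (Fin m → ℤ))
    (b : Fin m → ℤ) (hb : b ∉ H) :
    ∃ (d : ℕ), 0 < d ∧ ∃ θ : (Fin m → ℤ) →+ ZMod d,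
      (∀ h ∈ H, θ h = 0) ∧ θ b ≠ 0 := by
  classical
  -- the quotient group and the image of b in it
  have hbQ : (QuotientAddGroup.mk' H) b ≠ 0 := by
    rw [Ne, QuotientAddGroup.mk'_apply, QuotientAddGroup.eq_zero_iff]
    exact hb
  obtain ⟨χ, hχ⟩ := CharacterModule.exists_character_apply_ne_zero_of_ne_zero hbQ
  -- θ₀ : ℤ^m →+ ℚ/ℤ kills H and is nonzero on b
  set θ₀ : (Fin m → ℤ) →+ AddCircle (1 : ℚ) :=
    (χ : ((Fin m → ℤ) ⧸ H) →+ AddCircle (1 : ℚ)).comp (QuotientAddGroup.mk' H) with hθ₀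
  have hθ₀H : ∀ h ∈ H, θ₀ h = 0 := by
    intro h hh
    have : (QuotientAddGroup.mk' H) h = 0 := (QuotientAddGroup.eq_zero_iff h).mpr hh
    show χ ((QuotientAddGroup.mk' H) h) = 0
    rw [this, map_zero]
  have hθ₀b : θ₀ b ≠ 0 := hχ
  -- the quotient map ℚ → ℚ/ℤ as a hom
  set M : ℚ →+ AddCircle (1 : ℚ) :=
    QuotientAddGroup.mk' (AddSubgroup.zmultiples (1 : ℚ)) with hM
  have hMcoe : ∀ r : ℚ, (r : AddCircle (1 : ℚ)) = M r := fun _ => rfl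
  -- standard basis vectors and rational lifts of their images
  set e : Fin m → (Fin m → ℤ) := fun i => fun j => if i = j then 1 else 0 with he
  have hq : ∀ i, ∃ r : ℚ, M r = θ₀ (e i) := fun i =>
    QuotientAddGroup.mk_surjective (θ₀ (e i))
  choose q hq using hq
  -- common denominator
  set d : ℕ := ∏ i, (q i).den with hd
  have hdpos : 0 < d := Finset.prod_pos fun i _ => (q i).pos
  have hdne : (d : ℚ) ≠ 0 := by exact_mod_cast hdpos.ne'
  -- integer numerators: (c i : ℚ) = q i * d
  have hden : ∀ i, ∃ k : ℕ, d = (q i).den * k := fun i =>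
    (Finset.dvd_prod_of_mem _ (Finset.mem_univ i) : (q i).den ∣ d)
  choose k hk using hden
  set c : Fin m → ℤ := fun i => (q i).num * (k i : ℤ) with hc
  have hcq : ∀ i, (c i : ℚ) = q i * d := by
    intro i
    have hden0 : ((q i).den : ℚ) ≠ 0 := by
      exact_mod_cast (q i).den_nz
    have hnum : ((q i).num : ℚ) = q i * (q i).den :=
      (div_eq_iff hden0).mp (Rat.num_div_den (q i))
    calc (c i : ℚ) = ((q i).num : ℚ) * (k i : ℚ) := by rw [hc]; push_cast; ring
      _ = (q i * ((q i).den : ℚ)) * (k i : ℚ) := by rw [hnum]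
      _ = q i * d := by rw [hk i]; push_cast; ring
  -- key : θ₀ x = 0 ↔ ψ x = 0 (where ψ x = ∑ x i * c i in ZMod d)
  have key : ∀ x : Fin m → ℤ,
      (θ₀ x = 0 ↔ (∑ i, ((x i : ℤ) : ZMod d) * ((c i : ℤ) : ZMod d)) = 0) := by
    intro x
    -- θ₀ x as a rational mod 1
    have hx : θ₀ x = M (∑ i, (x i : ℚ) * q i) := by
      have hxe : x = ∑ i, x i • e i := by
        rw [he]; exact pi_eq_sum_univ x
      conv_lhs => rw [hxe]
      rw [map_sum, map_sum]
      refine Finset.sum_congr rfl fun i _ => ?_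
      rw [map_zsmul, ← hq i, ← map_zsmul M]
      congr 1
      all_goals simp [zsmul_eq_mul]
    have hsum : (∑ i, (x i : ℚ) * q i) = ((∑ i, x i * c i : ℤ) : ℚ) / d := by
      rw [eq_div_iff hdne, Finset.sum_mul]
      push_cast
      refine Finset.sum_congr rfl fun i _ => ?_
      rw [hcq i]; ring
    have hcast : ((∑ i, x i * c i : ℤ) : ZMod d)
        = ∑ i, ((x i : ℤ) : ZMod d) * ((c i : ℤ) : ZMod d) := by
      push_cast; rfl
    rw [hx, hsum, ← hcast]
    rw [ZMod.intCast_zmod_eq_zero_iff_dvd]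
    constructor
    · intro h0
      have hmem := (QuotientAddGroup.eq_zero_iff (((∑ i, x i * c i : ℤ) : ℚ) / d)).mp h0
      obtain ⟨z, hz⟩ := AddSubgroup.mem_zmultiples_iff.mp hmem
      rw [zsmul_eq_mul, mul_one, eq_div_iff hdne] at hz
      have : (z * d : ℤ) = ∑ i, x i * c i := by exact_mod_cast hz
      exact ⟨z, by linarith⟩
    · intro hdvd
      obtain ⟨z, hz⟩ := hdvd
      have hz' : z • (1 : ℚ) = ((∑ i, x i * c i : ℤ) : ℚ) / d := by
        rw [zsmul_eq_mul, mul_one, eq_comm, div_eq_iff hdne, hz]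
        push_cast; ring
      exact (QuotientAddGroup.eq_zero_iff _).mpr
        (AddSubgroup.mem_zmultiples_iff.mpr ⟨z, hz'⟩)
  -- assemble the homomorphism
  refine ⟨d, hdpos,
    AddMonoidHom.mk' (fun x => ∑ i, ((x i : ℤ) : ZMod d) * ((c i : ℤ) : ZMod d)) ?_,
    ?_, ?_⟩
  · intro x y
    simp [Pi.add_apply, Int.cast_add, add_mul, Finset.sum_add_distrib]
  · intro h hh
    exact (key h).mp (hθ₀H h hh)
  · intro h0
    exact hθ₀b ((key b).mpr h0)
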